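/- arXiv:2008.13010 — 3 statements merged into one kernel-verified Lean document; each statement's English description precedes it below -/
import Mathlib

section
/- Let 𝒞 ⊆ ℝ^{n+m} and 𝒫 ⊆ ℝⁿ be proper C-sets and let A ∈ ℝ^{n×n}, B ∈ ℝ^{n×m}. For x ∈ ℝⁿ let u⁺(x) ⊆ ℝᵐ be the set of minimizers of u ↦ γ(𝒞,(x,u)) + γ(𝒫, Ax+Bu). Then: (a) for every x ∈ ℝⁿ, u⁺(x) is nonempty, compact and convex; (b) u⁺ is positively homogeneous of the first degree, i.e. u⁺(ηx) = η·u⁺(x) for all η ≥ 0 and all x ∈ ℝⁿ; and (c) u⁺ is outer semicontinuous: for every x ∈ ℝⁿ, every sequence x_k → x and every convergent sequence u_k → u with u_k ∈ u⁺(x_k) for all k, one has u ∈ u⁺(x). -/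
open Pointwise Filter Topology Matrix

set_option maxHeartbeats 1000000
set_option synthInstance.maxHeartbeats 1000000

noncomputable section

/-- ℝⁿ with the standard (Euclidean) inner product. -/
abbrev Rsp (n : ℕ) := EuclideanSpace ℝ (Fin n)

/-- ℝ^{n+m} realized as the L²-product ℝⁿ × ℝᵐ. -/
abbrev Rsp2 (n m : ℕ) := WithLp 2 (Rsp n × Rsp m)

/-- A C-set: compact, convex, containing the origin. -/
def IsCSet {E : Type*} [NormedAddCommGroup E] [NormedSpace ℝ E] (X : Set E) : Prop :=
  IsCompact X ∧ Convex ℝ X ∧ (0 : E) ∈ X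

/-- A proper C-set: a C-set containing the origin in its interior. -/
def IsProperCSet {E : Type*} [NormedAddCommGroup E] [NormedSpace ℝ E] (X : Set E) : Prop :=
  IsCSet X ∧ (0 : E) ∈ interior X

/-- The polar set 𝒳* = {y : ⟨y,x⟩ ≤ 1 for all x ∈ 𝒳}. -/
def polarSet {E : Type*} [NormedAddCommGroup E] [InnerProductSpace ℝ E] (X : Set E) : Set E :=
  {y | ∀ x ∈ X, inner ℝ y x ≤ (1 : ℝ)}

/-- The Minkowski (gauge) function γ(𝒳,y) = inf{η ≥ 0 : y ∈ η𝒳}. -/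
def mgauge {E : Type*} [NormedAddCommGroup E] [NormedSpace ℝ E] (X : Set E) (y : E) : ℝ :=
  sInf {η : ℝ | 0 ≤ η ∧ y ∈ η • X}

variable {n m : ℕ}

/-- The map M = (A B) : ℝ^{n+m} → ℝⁿ, M(x,u) = Ax + Bu. -/
def Mfwd (A : Matrix (Fin n) (Fin n) ℝ) (B : Matrix (Fin n) (Fin m) ℝ) (w : Rsp2 n m) : Rsp n :=
  Matrix.toEuclideanLin A w.ofLp.1 + Matrix.toEuclideanLin B w.ofLp.2

/-- The transpose map Mᵀ : ℝⁿ → ℝ^{n+m}, Mᵀp = (Aᵀp, Bᵀp). -/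
def Mtr (A : Matrix (Fin n) (Fin n) ℝ) (B : Matrix (Fin n) (Fin m) ℝ) (p : Rsp n) : Rsp2 n m :=
  WithLp.toLp 2 (Matrix.toEuclideanLin Aᵀ p, Matrix.toEuclideanLin Bᵀ p)

/-- The projection P_x : ℝ^{n+m} → ℝⁿ, (x,u) ↦ x. -/
def Pxproj : Rsp2 n m → Rsp n := fun w => w.ofLp.1


/-- `mgauge` coincides with Mathlib's `gauge` for sets containing the origin. -/
lemma mgauge_eq_gauge {E : Type*} [NormedAddCommGroup E] [NormedSpace ℝ E]
    {X : Set E} (h0 : (0:E) ∈ X) (y : E) : mgauge X y = gauge X y := by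
  rcases eq_or_ne y 0 with rfl | hy
  · rw [gauge_zero]
    refine le_antisymm ?_ (le_csInf ⟨1, zero_le_one,
      by simpa using Set.smul_mem_smul_set (a := (1:ℝ)) h0⟩ fun η hη => hη.1)
    exact csInf_le ⟨0, fun η hη => hη.1⟩
      ⟨le_refl 0, by simpa using Set.smul_mem_smul_set (a := (0:ℝ)) h0⟩
  · unfold mgauge gauge
    congr 1
    ext η
    simp only [Set.mem_setOf_eq]
    constructor
    · rintro ⟨hη, hmem⟩
      rcases hη.eq_or_lt with rfl | hpos
      · exfalso
        rw [Set.zero_smul_set ⟨0, h0⟩] at hmem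
        exact hy hmem
      · exact ⟨hpos, hmem⟩
    · rintro ⟨hη, hmem⟩
      exact ⟨hη.le, hmem⟩

/-- The linear-map version of `Mfwd`. -/
def MfwdL (A : Matrix (Fin n) (Fin n) ℝ) (B : Matrix (Fin n) (Fin m) ℝ) :
    Rsp2 n m →ₗ[ℝ] Rsp n :=
  (Matrix.toEuclideanLin A ∘ₗ LinearMap.fst ℝ (Rsp n) (Rsp m)
    + Matrix.toEuclideanLin B ∘ₗ LinearMap.snd ℝ (Rsp n) (Rsp m))
    ∘ₗ (WithLp.linearEquiv 2 ℝ (Rsp n × Rsp m)).toLinearMap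

lemma MfwdL_apply (A : Matrix (Fin n) (Fin n) ℝ) (B : Matrix (Fin n) (Fin m) ℝ)
    (w : Rsp2 n m) : MfwdL A B w = Mfwd A B w := rfl

/-- A continuous coercive function on `ℝᵐ` attains a global minimum. -/
lemma exists_global_min {φ : Rsp m → ℝ} (hcont : Continuous φ) {R : ℝ} (hR : 0 < R)
    (hcoer : ∀ u, ‖u‖ ≤ R * φ u) : ∃ u₀ : Rsp m, ∀ v, φ u₀ ≤ φ v := by
  have hφ0 : 0 ≤ φ 0 := by
    have h := hcoer 0
    rw [norm_zero] at h
    nlinarith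
  have h0K : (0 : Rsp m) ∈ Metric.closedBall (0 : Rsp m) (R * φ 0) := by
    simp [mul_nonneg hR.le hφ0]
  obtain ⟨u₀, hu₀K, hmin⟩ := (isCompact_closedBall (0 : Rsp m) (R * φ 0)).exists_isMinOn
    ⟨0, h0K⟩ hcont.continuousOn
  refine ⟨u₀, fun v => ?_⟩
  by_cases hv : v ∈ Metric.closedBall (0 : Rsp m) (R * φ 0)
  · exact (isMinOn_iff.mp hmin) v hv
  · have h1 : φ u₀ ≤ φ 0 := (isMinOn_iff.mp hmin) 0 h0K
    have h2 : R * φ 0 < ‖v‖ := by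
      simpa [Metric.mem_closedBall, dist_zero_right, not_le] using hv
    have h3 := hcoer v
    have h4 : R * φ 0 < R * φ v := lt_of_lt_of_le h2 h3
    have h5 : φ 0 < φ v := (mul_lt_mul_iff_right₀ hR).mp h4
    linarith

/-- the minimizer map u⁺ is nonempty-, compact-, convex-valued,
positively homogeneous of the first degree, and outer semicontinuous. -/
theorem stmt_4 (n m : ℕ) (C : Set (Rsp2 n m)) (P : Set (Rsp n))
    (hC : IsProperCSet C) (hP : IsProperCSet P)
    (A : Matrix (Fin n) (Fin n) ℝ) (B : Matrix (Fin n) (Fin m) ℝ)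
    (uPlus : Rsp n → Set (Rsp m))
    (huP : ∀ x : Rsp n, uPlus x =
      {u : Rsp m | ∀ v : Rsp m,
        mgauge C (WithLp.toLp 2 (x, u) : Rsp2 n m) + mgauge P (Mfwd A B (WithLp.toLp 2 (x, u))) ≤
          mgauge C (WithLp.toLp 2 (x, v) : Rsp2 n m) + mgauge P (Mfwd A B (WithLp.toLp 2 (x, v)))}) :
    (∀ x : Rsp n, (uPlus x).Nonempty ∧ IsCompact (uPlus x) ∧ Convex ℝ (uPlus x)) ∧
    (∀ η : ℝ, 0 ≤ η → ∀ x : Rsp n, uPlus (η • x) = η • uPlus x) ∧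
    (∀ (x : Rsp n) (u : Rsp m) (xs : ℕ → Rsp n) (us : ℕ → Rsp m),
      Tendsto xs atTop (nhds x) → Tendsto us atTop (nhds u) →
      (∀ k : ℕ, us k ∈ uPlus (xs k)) → u ∈ uPlus x) := by
  obtain ⟨⟨hCcomp, hCconv, hC0⟩, hCint⟩ := hC
  obtain ⟨⟨hPcomp, hPconv, hP0⟩, hPint⟩ := hP
  have hCnhds : C ∈ 𝓝 (0 : Rsp2 n m) := mem_interior_iff_mem_nhds.mp hCint
  have hPnhds : P ∈ 𝓝 (0 : Rsp n) := mem_interior_iff_mem_nhds.mp hPint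
  have hCabs : Absorbent ℝ C := by
    obtain ⟨r, hr, hsub⟩ := Metric.mem_nhds_iff.mp hCnhds
    exact (absorbent_ball_zero hr).mono hsub
  have hPabs : Absorbent ℝ P := absorbent_nhds_zero hPnhds
  obtain ⟨R, hR0, hCR⟩ : ∃ R : ℝ, 0 < R ∧ ∀ z ∈ C, ‖z‖ ≤ R := by
    obtain ⟨r, hr⟩ := hCcomp.isBounded.subset_closedBall 0
    refine ⟨max r 1, lt_of_lt_of_le one_pos (le_max_right _ _), fun z hz => ?_⟩
    have h := hr hz
    rw [Metric.mem_closedBall, dist_zero_right] at h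
    exact h.trans (le_max_left _ _)
  set L := MfwdL A B with hL
  set g : Rsp2 n m → ℝ := fun w => gauge C w + gauge P (L w) with hg
  have hgcont : Continuous g :=
    (continuous_gauge hCconv hCnhds).add
      ((continuous_gauge hPconv hPnhds).comp L.continuous_of_finiteDimensional)
  have hgnonneg : ∀ w, 0 ≤ g w := fun w => add_nonneg (gauge_nonneg _) (gauge_nonneg _)
  have hgadd : ∀ w w', g (w + w') ≤ g w + g w' := by
    intro w w'
    have h1 := gauge_add_le hCconv hCabs w w'
    have h2 := gauge_add_le hPconv hPabs (L w) (L w')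
    simp only [hg, map_add]
    linarith
  have hgsmul : ∀ a : ℝ, 0 ≤ a → ∀ w, g (a • w) = a * g w := by
    intro a ha w
    simp only [hg, _root_.map_smul, gauge_smul_of_nonneg ha, smul_eq_mul]
    ring
  have hcoer : ∀ w : Rsp2 n m, ‖w‖ ≤ R * g w := by
    intro w
    have h1 : ‖w‖ ≤ R * gauge C w := by
      have hle : ‖w‖ / R ≤ gauge C w := by
        refine le_csInf hCabs.gauge_set_nonempty ?_
        rintro r ⟨hr, z, hz, rfl⟩
        rw [div_le_iff₀ hR0]
        calc ‖r • z‖ = r * ‖z‖ := by rw [norm_smul, Real.norm_of_nonneg hr.le]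
        _ ≤ r * R := mul_le_mul_of_nonneg_left (hCR z hz) hr.le
      calc ‖w‖ = (‖w‖ / R) * R := by field_simp
      _ ≤ gauge C w * R := mul_le_mul_of_nonneg_right hle hR0.le
      _ = R * gauge C w := mul_comm _ _
    have h2 : 0 ≤ gauge P (L w) := gauge_nonneg _
    simp only [hg]
    nlinarith
  have huP' : ∀ x : Rsp n, uPlus x =
      {u : Rsp m | ∀ v : Rsp m, g (WithLp.toLp 2 (x, u) : Rsp2 n m) ≤ g (WithLp.toLp 2 (x, v) : Rsp2 n m)} := by
    intro x
    rw [huP x]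
    ext u
    simp only [Set.mem_setOf_eq]
    have hrw : ∀ v : Rsp m, mgauge C (WithLp.toLp 2 (x, v) : Rsp2 n m) + mgauge P (Mfwd A B (WithLp.toLp 2 (x, v)))
        = g (WithLp.toLp 2 (x, v) : Rsp2 n m) := by
      intro v
      simp only [hg, hL]
      rw [mgauge_eq_gauge hC0, mgauge_eq_gauge hP0, MfwdL_apply]
    constructor
    · intro h v
      rw [← hrw u, ← hrw v]
      exact h v
    · intro h v
      rw [hrw u, hrw v]
      exact h v
  have hpair : ∀ x : Rsp n, Continuous (fun u : Rsp m => (WithLp.toLp 2 (x, u) : Rsp2 n m)) := by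
    intro x
    have hsymm : Continuous (WithLp.toLp 2 : Rsp n × Rsp m → Rsp2 n m) :=
      WithLp.prod_continuous_toLp 2 (Rsp n) (Rsp m)
    exact hsymm.comp (continuous_const.prodMk continuous_id)
  have hsndle : ∀ w : Rsp2 n m, ‖w.snd‖ ≤ ‖w‖ := by
    intro w
    have h := WithLp.prod_norm_sq_eq_of_L2 w
    nlinarith [norm_nonneg w, norm_nonneg w.fst, norm_nonneg w.snd]
  have hcoeru : ∀ (x : Rsp n) (u : Rsp m), ‖u‖ ≤ R * g (WithLp.toLp 2 (x, u) : Rsp2 n m) := by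
    intro x u
    exact le_trans (hsndle (WithLp.toLp 2 (x, u) : Rsp2 n m)) (hcoer _)
  have hkey1 : ∀ x : Rsp n,
      (uPlus x).Nonempty ∧ IsCompact (uPlus x) ∧ Convex ℝ (uPlus x) := by
    intro x
    obtain ⟨u₀, hu₀⟩ := exists_global_min (hgcont.comp (hpair x)) hR0 (fun u => hcoeru x u)
    have hne : (uPlus x).Nonempty := ⟨u₀, by rw [huP' x]; exact hu₀⟩
    refine ⟨hne, ?_, ?_⟩
    · have hclosed : IsClosed (uPlus x) := by
        rw [huP' x]
        have hset : {u : Rsp m | ∀ v, g (WithLp.toLp 2 (x,u) : Rsp2 n m) ≤ g (WithLp.toLp 2 (x,v) : Rsp2 n m)}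
            = ⋂ v : Rsp m, {u : Rsp m | g (WithLp.toLp 2 (x,u) : Rsp2 n m) ≤ g (WithLp.toLp 2 (x,v) : Rsp2 n m)} := by
          ext u
          simp [Set.mem_iInter]
        rw [hset]
        exact isClosed_iInter fun v =>
          isClosed_le (hgcont.comp (hpair x)) continuous_const
      have hsub : uPlus x ⊆ Metric.closedBall 0 (R * g (WithLp.toLp 2 (x, (0 : Rsp m)) : Rsp2 n m)) := by
        intro u hu
        rw [huP' x] at hu
        have h1 : g (WithLp.toLp 2 (x,u) : Rsp2 n m) ≤ g (WithLp.toLp 2 (x,(0:Rsp m)) : Rsp2 n m) := hu 0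
        have h2 := hcoeru x u
        rw [Metric.mem_closedBall, dist_zero_right]
        calc ‖u‖ ≤ R * g (WithLp.toLp 2 (x,u) : Rsp2 n m) := h2
        _ ≤ R * g (WithLp.toLp 2 (x,(0:Rsp m)) : Rsp2 n m) := mul_le_mul_of_nonneg_left h1 hR0.le
      exact (isCompact_closedBall _ _).of_isClosed_subset hclosed hsub
    · intro u hu v' hv' a b ha hb hab
      rw [huP' x] at hu hv' ⊢
      intro v
      have key : (WithLp.toLp 2 (x, a • u + b • v') : Rsp2 n m)
          = a • (WithLp.toLp 2 (x,u) : Rsp2 n m) + b • (WithLp.toLp 2 (x,v') : Rsp2 n m) := by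
        refine (WithLp.ofLp_injective 2) (Prod.ext ?_ ?_)
        · show x = a • x + b • x
          rw [← add_smul, hab, one_smul]
        · rfl
      have e1 : g (WithLp.toLp 2 (x, a • u + b • v') : Rsp2 n m)
          ≤ a * g (WithLp.toLp 2 (x,u) : Rsp2 n m) + b * g (WithLp.toLp 2 (x,v') : Rsp2 n m) := by
        rw [key]
        calc g (a • (WithLp.toLp 2 (x,u) : Rsp2 n m) + b • (WithLp.toLp 2 (x,v') : Rsp2 n m))
            ≤ g (a • (WithLp.toLp 2 (x,u) : Rsp2 n m)) + g (b • (WithLp.toLp 2 (x,v') : Rsp2 n m)) := hgadd _ _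
        _ = a * g (WithLp.toLp 2 (x,u) : Rsp2 n m) + b * g (WithLp.toLp 2 (x,v') : Rsp2 n m) := by
            rw [hgsmul a ha, hgsmul b hb]
      have e2 := mul_le_mul_of_nonneg_left (hu v) ha
      have e3 := mul_le_mul_of_nonneg_left (hv' v) hb
      have e4 : a * g (WithLp.toLp 2 (x,v) : Rsp2 n m) + b * g (WithLp.toLp 2 (x,v) : Rsp2 n m)
          = g (WithLp.toLp 2 (x,v) : Rsp2 n m) := by rw [← add_mul, hab, one_mul]
      linarith
  refine ⟨hkey1, ?_, ?_⟩
  · intro η hη x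
    rcases eq_or_lt_of_le hη with rfl | hηpos
    · have hz : (WithLp.toLp 2 ((0 : Rsp n), (0 : Rsp m)) : Rsp2 n m) = 0 := rfl
      have hg0 : g (WithLp.toLp 2 ((0 : Rsp n), (0 : Rsp m)) : Rsp2 n m) = 0 := by
        rw [hz]
        simp [hg, map_zero]
      have huz : uPlus ((0:ℝ) • x) = {0} := by
        rw [zero_smul, huP' 0]
        ext u
        simp only [Set.mem_setOf_eq, Set.mem_singleton_iff]
        constructor
        · intro h
          have h0 : g (WithLp.toLp 2 ((0 : Rsp n), u) : Rsp2 n m) ≤ 0 := by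
            have h' := h 0
            rwa [hg0] at h'
          have h2 := hcoeru 0 u
          have h3 : ‖u‖ ≤ 0 := by nlinarith
          exact norm_le_zero_iff.mp h3
        · rintro rfl v
          rw [hg0]
          exact hgnonneg _
      rw [huz, Set.zero_smul_set (hkey1 x).1]
      exact Set.singleton_zero
    · ext u
      rw [huP' (η • x), Set.mem_smul_set_iff_inv_smul_mem₀ (ne_of_gt hηpos), huP' x]
      simp only [Set.mem_setOf_eq]
      have keyw : ∀ u' : Rsp m, (WithLp.toLp 2 (η • x, u') : Rsp2 n m)
          = η • (WithLp.toLp 2 (x, η⁻¹ • u') : Rsp2 n m) := by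
        intro u'
        refine (WithLp.ofLp_injective 2) (Prod.ext ?_ ?_)
        · rfl
        · show u' = η • η⁻¹ • u'
          rw [smul_inv_smul₀ (ne_of_gt hηpos)]
      constructor
      · intro h v
        have h1 := h (η • v)
        rw [keyw u, keyw (η • v), hgsmul η hη, hgsmul η hη] at h1
        have h2 := (mul_le_mul_iff_right₀ hηpos).mp h1
        rwa [inv_smul_smul₀ (ne_of_gt hηpos)] at h2
      · intro h v
        have h1 := h (η⁻¹ • v)
        rw [keyw u, keyw v, hgsmul η hη, hgsmul η hη]
        exact mul_le_mul_of_nonneg_left h1 hη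
  · intro x u xs us hxs hus hmem
    rw [huP' x]
    intro v
    have hmem' : ∀ k, g (WithLp.toLp 2 (xs k, us k) : Rsp2 n m) ≤ g (WithLp.toLp 2 (xs k, v) : Rsp2 n m) := by
      intro k
      have h := hmem k
      rw [huP' (xs k)] at h
      exact h v
    have ht1 : Tendsto (fun k => (WithLp.toLp 2 (xs k, us k) : Rsp2 n m)) atTop (𝓝 (WithLp.toLp 2 (x,u) : Rsp2 n m)) := by
      have h1 : Tendsto (fun k => (xs k, us k)) atTop (𝓝 ((x, u) : Rsp n × Rsp m)) :=
        hxs.prodMk_nhds hus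
      have hsymm : Continuous (WithLp.toLp 2 : Rsp n × Rsp m → Rsp2 n m) :=
        WithLp.prod_continuous_toLp 2 (Rsp n) (Rsp m)
      exact (hsymm.tendsto _).comp h1
    have ht2 : Tendsto (fun k => (WithLp.toLp 2 (xs k, v) : Rsp2 n m)) atTop (𝓝 (WithLp.toLp 2 (x,v) : Rsp2 n m)) := by
      have h1 : Tendsto (fun k => (xs k, v)) atTop (𝓝 ((x, v) : Rsp n × Rsp m)) :=
        hxs.prodMk_nhds tendsto_const_nhds
      have hsymm : Continuous (WithLp.toLp 2 : Rsp n × Rsp m → Rsp2 n m) :=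
        WithLp.prod_continuous_toLp 2 (Rsp n) (Rsp m)
      exact (hsymm.tendsto _).comp h1
    exact le_of_tendsto_of_tendsto' ((hgcont.tendsto _).comp ht1) ((hgcont.tendsto _).comp ht2) hmem'
end
end

section
/- Let 𝒞 ⊆ ℝ^{n+m} be a proper C-set, let A ∈ ℝ^{n×n}, B ∈ ℝ^{n×m}, and let ℒ ⊆ ℝⁿ be a proper C-set verifying the control Lyapunov decrease condition (for every x ∈ ℝⁿ there exists u ∈ ℝᵐ with γ(ℒ, Ax+Bu) + γ(𝒞, (x,u)) ≤ γ(ℒ, x)). Define 𝒦⁺ = (𝒞* ⊕ Mᵀℒ*)* and ℒ⁺ = P_x𝒦⁺. Then: (a) 𝒦⁺ is a proper C-set in ℝ^{n+m} and ℒ⁺ is a proper C-set in ℝⁿ; (b) for every (x,u) ∈ ℝⁿ × ℝᵐ, γ(𝒦⁺,(x,u)) = γ(ℒ, Ax+Bu) + γ(𝒞,(x,u)); and (c) for every x ∈ ℝⁿ there exists u ∈ ℝᵐ such that γ(ℒ⁺, x) ≤ γ(𝒦⁺,(x,u)) ≤ γ(ℒ, x). -/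
open Pointwise Filter Topology Matrix

set_option maxHeartbeats 1000000
set_option synthInstance.maxHeartbeats 400000

noncomputable section

variable {n m : ℕ}

/-! ### Auxiliary lemmas -/

open RealInnerProductSpace

section PolarBasics
variable {E : Type*} [NormedAddCommGroup E] [InnerProductSpace ℝ E]

lemma zero_mem_polarSet (X : Set E) : (0:E) ∈ polarSet X := by
  intro x _; simp [inner_zero_left]

lemma convex_polarSet (X : Set E) : Convex ℝ (polarSet X) := by
  intro y hy z hz a b ha hb hab x hx
  have h1 := hy x hx
  have h2 := hz x hx
  have : ⟪a • y + b • z, x⟫ = a * ⟪y, x⟫ + b * ⟪z, x⟫ := by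
    rw [inner_add_left, real_inner_smul_left, real_inner_smul_left]
  show ⟪a • y + b • z, x⟫ ≤ 1
  rw [this]; nlinarith

lemma isClosed_polarSet (X : Set E) : IsClosed (polarSet X) := by
  have : polarSet X = ⋂ x ∈ X, {y : E | ⟪y, x⟫ ≤ 1} := by
    ext y; simp [polarSet]
  rw [this]
  exact isClosed_biInter fun x _ =>
    isClosed_le (continuous_id.inner continuous_const) continuous_const

lemma polarSet_subset_closedBall {X : Set E} {ε : ℝ} (hε : 0 < ε)
    (h : Metric.ball (0:E) ε ⊆ X) :
    polarSet X ⊆ Metric.closedBall 0 (2/ε) := by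
  intro y hy
  rw [Metric.mem_closedBall, dist_zero_right]
  rcases eq_or_ne y 0 with rfl | hy0
  · simp; positivity
  · have hny : 0 < ‖y‖ := norm_pos_iff.2 hy0
    have hx : ((ε/2) * ‖y‖⁻¹) • y ∈ Metric.ball (0:E) ε := by
      rw [Metric.mem_ball, dist_zero_right, norm_smul]
      rw [Real.norm_eq_abs, abs_of_pos (by positivity)]
      rw [mul_assoc, inv_mul_cancel₀ hny.ne']
      linarith
    have h1 := hy _ (h hx)
    rw [real_inner_smul_right, real_inner_self_eq_norm_sq] at h1
    have : (ε/2) * ‖y‖⁻¹ * ‖y‖^2 = (ε/2) * ‖y‖ := by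
      field_simp
    rw [this] at h1
    rw [div_eq_mul_inv]
    nlinarith [mul_inv_cancel₀ hε.ne', mul_pos hε hny]

lemma zero_mem_interior_polarSet {X : Set E} {R : ℝ} (hR : 0 < R)
    (h : X ⊆ Metric.closedBall 0 R) :
    (0:E) ∈ interior (polarSet X) := by
  rw [mem_interior]
  refine ⟨Metric.ball 0 R⁻¹, ?_, Metric.isOpen_ball, by simp [hR]⟩
  intro y hy x hx
  rw [Metric.mem_ball, dist_zero_right] at hy
  have hx' : ‖x‖ ≤ R := by
    have := h hx; rwa [Metric.mem_closedBall, dist_zero_right] at this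
  have h1 : ⟪y, x⟫ ≤ ‖y‖ * ‖x‖ := real_inner_le_norm _ _
  have h2 : ‖y‖ * ‖x‖ ≤ R⁻¹ * R := by
    apply mul_le_mul hy.le hx' (norm_nonneg _) (by positivity)
  show ⟪y, x⟫ ≤ 1
  rw [inv_mul_cancel₀ hR.ne'] at h2
  linarith

lemma subset_bipolar {X : Set E} : X ⊆ polarSet (polarSet X) := by
  intro x hx y hy
  rw [real_inner_comm]
  exact hy x hx

lemma bipolar [CompleteSpace E] {X : Set E} (hconv : Convex ℝ X) (hcl : IsClosed X)
    (h0 : (0:E) ∈ X) : polarSet (polarSet X) = X := by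
  refine Set.Subset.antisymm ?_ subset_bipolar
  intro z hz
  by_contra hzX
  obtain ⟨f, u, hfs, hfz⟩ := geometric_hahn_banach_closed_point hconv hcl hzX
  have hu : 0 < u := by have := hfs 0 h0; simpa using this
  set v : E := (InnerProductSpace.toDual ℝ E).symm f with hv
  have hvf : ∀ x : E, ⟪v, x⟫ = f x := fun x => InnerProductSpace.toDual_symm_apply
  have hyX : u⁻¹ • v ∈ polarSet X := by
    intro x hx
    show ⟪u⁻¹ • v, x⟫ ≤ 1
    rw [real_inner_smul_left, hvf]
    have := hfs x hx
    rw [inv_mul_le_iff₀ hu]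
    linarith
  have h1 := hz _ hyX
  rw [real_inner_smul_right, real_inner_comm, hvf] at h1
  have : u < f z := hfz
  rw [inv_mul_le_iff₀ hu] at h1
  linarith

end PolarBasics

/-- The support function `w ↦ sup_{p ∈ S} ⟪p, w⟫`. -/
def hsup {E : Type*} [NormedAddCommGroup E] [InnerProductSpace ℝ E] (S : Set E) (w : E) : ℝ :=
  sSup ((fun p => ⟪p, w⟫) '' S)

section Hsup
variable {E : Type*} [NormedAddCommGroup E] [InnerProductSpace ℝ E]

lemma hsup_bddAbove {S : Set E} (hS : IsCompact S) (w : E) :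
    BddAbove ((fun p => ⟪p, w⟫) '' S) :=
  (hS.image (continuous_id.inner continuous_const)).bddAbove

lemma le_hsup {S : Set E} (hS : IsCompact S) {x : E} (hx : x ∈ S) (w : E) :
    ⟪x, w⟫ ≤ hsup S w :=
  le_csSup (hsup_bddAbove hS w) (Set.mem_image_of_mem _ hx)

lemma hsup_le {S : Set E} (hS : S.Nonempty) {w : E} {a : ℝ}
    (h : ∀ x ∈ S, ⟪x, w⟫ ≤ a) : hsup S w ≤ a := by
  apply csSup_le (hS.image _)
  rintro t ⟨x, hx, rfl⟩
  exact h x hx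

lemma hsup_nonneg {S : Set E} (hS : IsCompact S) (h0 : (0:E) ∈ S) (w : E) :
    0 ≤ hsup S w := by
  have := le_hsup hS h0 w
  simpa using this

lemma mem_smul_polarSet {S : Set E} {w : E} {η : ℝ} (hη : 0 < η) :
    w ∈ η • polarSet S ↔ ∀ x ∈ S, ⟪x, w⟫ ≤ η := by
  rw [Set.mem_smul_set_iff_inv_smul_mem₀ hη.ne']
  constructor
  · intro h x hx
    have h1 : ⟪η⁻¹ • w, x⟫ ≤ 1 := h x hx
    rw [real_inner_smul_left] at h1
    rw [real_inner_comm]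
    rw [inv_mul_le_iff₀ hη] at h1
    linarith
  · intro h x hx
    show ⟪η⁻¹ • w, x⟫ ≤ 1
    rw [real_inner_smul_left, inv_mul_le_iff₀ hη, mul_one, real_inner_comm]
    exact h x hx

lemma mgauge_polarSet {S : Set E} (hS : IsCompact S) (h0 : (0:E) ∈ S) (w : E) :
    mgauge (polarSet S) w = hsup S w := by
  have hSne : S.Nonempty := ⟨0, h0⟩
  have hnn : 0 ≤ hsup S w := hsup_nonneg hS h0 w
  have hub : ∀ x ∈ S, ⟪x, w⟫ ≤ hsup S w := fun x hx => le_hsup hS hx w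
  have hTmem : ∀ η : ℝ, hsup S w ≤ η → 0 < η →
      η ∈ {η : ℝ | 0 ≤ η ∧ w ∈ η • polarSet S} := by
    intro η h1 h2
    exact ⟨h2.le, (mem_smul_polarSet h2).2 fun x hx => le_trans (hub x hx) h1⟩
  have hbd : BddBelow {η : ℝ | 0 ≤ η ∧ w ∈ η • polarSet S} :=
    ⟨0, fun a ha => ha.1⟩
  apply le_antisymm
  · apply le_of_forall_pos_le_add
    intro ε hε
    exact csInf_le hbd (hTmem (hsup S w + ε) (by linarith) (by linarith))
  · refine le_csInf ⟨hsup S w + 1, hTmem _ (by linarith) (by linarith)⟩ ?_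
    rintro η ⟨hη0, hηw⟩
    rcases eq_or_lt_of_le hη0 with rfl | hη
    · rw [Set.zero_smul_set ⟨0, zero_mem_polarSet S⟩] at hηw
      have hw : w = 0 := by simpa using hηw
      subst hw
      apply hsup_le hSne
      intro x _
      simp
    · exact hsup_le hSne fun x hx => (mem_smul_polarSet hη).1 hηw x hx

lemma hsup_add {S T : Set E} (hSc : IsCompact S) (hSne : S.Nonempty)
    (hTc : IsCompact T) (hTne : T.Nonempty) (w : E) :
    hsup (S + T) w = hsup S w + hsup T w := by
  unfold hsup
  have himg : (fun p => ⟪p, w⟫) '' (S + T) =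
      ((fun p => ⟪p, w⟫) '' S) + ((fun p => ⟪p, w⟫) '' T) := by
    ext t
    constructor
    · rintro ⟨p, hp, rfl⟩
      rw [Set.mem_add] at hp
      obtain ⟨s, hs, u, hu, rfl⟩ := hp
      show ⟪s + u, w⟫ ∈ _
      rw [inner_add_left]
      exact Set.add_mem_add (Set.mem_image_of_mem _ hs) (Set.mem_image_of_mem _ hu)
    · rintro ⟨a, ⟨s, hs, rfl⟩, b, ⟨u, hu, rfl⟩, rfl⟩
      exact ⟨s + u, Set.add_mem_add hs hu, by simp [inner_add_left]⟩
  rw [himg]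
  exact csSup_add (hSne.image _) (hsup_bddAbove hSc w) (hTne.image _) (hsup_bddAbove hTc w)

lemma hsup_image {F : Type*} [NormedAddCommGroup F] [InnerProductSpace ℝ F]
    {f : E → F} {g : F → E} (hadj : ∀ p w, ⟪f p, w⟫ = ⟪p, g w⟫) (S : Set E) (w : F) :
    hsup (f '' S) w = hsup S (g w) := by
  unfold hsup
  rw [Set.image_image]
  congr 1
  ext t
  constructor
  · rintro ⟨p, hp, rfl⟩; exact ⟨p, hp, (hadj p w).symm⟩
  · rintro ⟨p, hp, rfl⟩; exact ⟨p, hp, hadj p w⟩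

end Hsup

section GaugeMisc
variable {E : Type*} [NormedAddCommGroup E] [NormedSpace ℝ E]

lemma exists_smul_mem_of_interior {K : Set E} (hK : (0:E) ∈ interior K) (w : E) :
    ∃ η : ℝ, 0 ≤ η ∧ w ∈ η • K := by
  obtain ⟨ε, hε, hball⟩ := Metric.mem_nhds_iff.1 (mem_interior_iff_mem_nhds.1 hK)
  have hpos : (0:ℝ) < (‖w‖ + 1) / ε := by positivity
  refine ⟨(‖w‖ + 1) / ε, hpos.le, ?_⟩
  rw [Set.mem_smul_set_iff_inv_smul_mem₀ hpos.ne']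
  apply hball
  rw [Metric.mem_ball, dist_zero_right, norm_smul, Real.norm_eq_abs, abs_of_pos (by positivity)]
  rw [inv_div, div_mul_eq_mul_div, mul_comm]
  have hw : 0 ≤ ‖w‖ := norm_nonneg w
  rw [div_lt_iff₀ (by positivity : (0:ℝ) < ‖w‖ + 1)]
  nlinarith

lemma mgauge_image_le {F : Type*} [NormedAddCommGroup F] [NormedSpace ℝ F]
    {T : E → F} (hT : ∀ (c : ℝ) (x : E), T (c • x) = c • T x)
    {K : Set E} (hK : (0:E) ∈ interior K) (w : E) :
    mgauge (T '' K) (T w) ≤ mgauge K w := by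
  apply csInf_le_csInf ⟨0, fun a ha => ha.1⟩
  · obtain ⟨η, h1, h2⟩ := exists_smul_mem_of_interior hK w
    exact ⟨η, h1, h2⟩
  · rintro η ⟨hη0, hηw⟩
    rw [Set.mem_smul_set] at hηw
    obtain ⟨k, hk, rfl⟩ := hηw
    exact ⟨hη0, Set.mem_smul_set.2 ⟨T k, Set.mem_image_of_mem _ hk, (hT η k).symm⟩⟩

end GaugeMisc

section RspLemmas
variable {n m : ℕ}

lemma toEuclideanLin_transpose_inner {k l : ℕ} (A : Matrix (Fin k) (Fin l) ℝ)
    (p : EuclideanSpace ℝ (Fin k)) (x : EuclideanSpace ℝ (Fin l)) :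
    ⟪Matrix.toEuclideanLin Aᵀ p, x⟫ = ⟪p, Matrix.toEuclideanLin A x⟫ := by
  rw [← Matrix.conjTranspose_eq_transpose_of_trivial,
      Matrix.toEuclideanLin_conjTranspose_eq_adjoint]
  exact LinearMap.adjoint_inner_left _ _ _

lemma Mtr_inner (A : Matrix (Fin n) (Fin n) ℝ) (B : Matrix (Fin n) (Fin m) ℝ)
    (p : Rsp n) (w : Rsp2 n m) : ⟪Mtr A B p, w⟫ = ⟪p, Mfwd A B w⟫ := by
  rw [WithLp.prod_inner_apply]
  show ⟪Matrix.toEuclideanLin Aᵀ p, w.ofLp.1⟫ + ⟪Matrix.toEuclideanLin Bᵀ p, w.ofLp.2⟫ = _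
  rw [toEuclideanLin_transpose_inner, toEuclideanLin_transpose_inner, Mfwd, inner_add_right]

/-- `Mtr` as a linear map. -/
def MtrL (A : Matrix (Fin n) (Fin n) ℝ) (B : Matrix (Fin n) (Fin m) ℝ) :
    Rsp n →ₗ[ℝ] Rsp2 n m :=
  (WithLp.linearEquiv 2 ℝ (Rsp n × Rsp m)).symm.toLinearMap.comp
    ((Matrix.toEuclideanLin Aᵀ).prod (Matrix.toEuclideanLin Bᵀ))

lemma Mtr_eq (A : Matrix (Fin n) (Fin n) ℝ) (B : Matrix (Fin n) (Fin m) ℝ) :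
    Mtr A B = ⇑(MtrL A B) := rfl

/-- `Pxproj` as a linear map. -/
def PxprojL : Rsp2 n m →ₗ[ℝ] Rsp n :=
  (LinearMap.fst ℝ (Rsp n) (Rsp m)).comp (WithLp.linearEquiv 2 ℝ (Rsp n × Rsp m)).toLinearMap

lemma Pxproj_eq : (Pxproj : Rsp2 n m → Rsp n) = ⇑(PxprojL (n := n) (m := m)) := rfl

lemma norm_pair_zero (w : Rsp2 n m) (hw : w.ofLp.2 = 0) : ‖w‖ = ‖w.ofLp.1‖ := by
  rw [@norm_eq_sqrt_real_inner (Rsp2 n m) _ _ w, @norm_eq_sqrt_real_inner (Rsp n) _ _ w.ofLp.1]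
  congr 1
  rw [WithLp.prod_inner_apply]
  show ⟪w.ofLp.1, w.ofLp.1⟫ + ⟪w.ofLp.2, w.ofLp.2⟫ = ⟪w.ofLp.1, w.ofLp.1⟫
  rw [hw]
  simp

end RspLemmas

/-- properties of 𝒦⁺ = (𝒞* ⊕ Mᵀℒ*)* and ℒ⁺ = P_x𝒦⁺ for a
Lyapunov proper C-set ℒ. -/
theorem stmt_7 (n m : ℕ) (C : Set (Rsp2 n m)) (hC : IsProperCSet C)
    (A : Matrix (Fin n) (Fin n) ℝ) (B : Matrix (Fin n) (Fin m) ℝ)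
    (L : Set (Rsp n)) (hL : IsProperCSet L)
    (hLyap : ∀ x : Rsp n, ∃ u : Rsp m,
      mgauge L (Mfwd A B (WithLp.toLp 2 (x, u))) + mgauge C (WithLp.toLp 2 (x, u) : Rsp2 n m) ≤ mgauge L x)
    (Kplus : Set (Rsp2 n m)) (hK : Kplus = polarSet (polarSet C + Mtr A B '' polarSet L))
    (Lplus : Set (Rsp n)) (hLp : Lplus = Pxproj '' Kplus) :
    (IsProperCSet Kplus ∧ IsProperCSet Lplus) ∧
    (∀ (x : Rsp n) (u : Rsp m),
      mgauge Kplus (WithLp.toLp 2 (x, u) : Rsp2 n m) =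
        mgauge L (Mfwd A B (WithLp.toLp 2 (x, u))) + mgauge C (WithLp.toLp 2 (x, u) : Rsp2 n m)) ∧
    (∀ x : Rsp n, ∃ u : Rsp m,
      mgauge Lplus x ≤ mgauge Kplus (WithLp.toLp 2 (x, u) : Rsp2 n m) ∧
      mgauge Kplus (WithLp.toLp 2 (x, u) : Rsp2 n m) ≤ mgauge L x) := by
  obtain ⟨⟨hCcomp, hCconv, hC0⟩, hCint⟩ := hC
  obtain ⟨⟨hLcomp, hLconv, hL0⟩, hLint⟩ := hL
  -- polar of C
  obtain ⟨εC, hεC, hballC⟩ := Metric.mem_nhds_iff.1 (mem_interior_iff_mem_nhds.1 hCint)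
  obtain ⟨εL, hεL, hballL⟩ := Metric.mem_nhds_iff.1 (mem_interior_iff_mem_nhds.1 hLint)
  set PC := polarSet C with hPC
  set PL := polarSet L with hPL
  have hPCcomp : IsCompact PC :=
    Metric.isCompact_of_isClosed_isBounded (isClosed_polarSet C)
      (Metric.isBounded_closedBall.subset (polarSet_subset_closedBall hεC hballC))
  have hPLcomp : IsCompact PL :=
    Metric.isCompact_of_isClosed_isBounded (isClosed_polarSet L)
      (Metric.isBounded_closedBall.subset (polarSet_subset_closedBall hεL hballL))
  have hPC0 : (0 : Rsp2 n m) ∈ PC := zero_mem_polarSet C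
  have hPL0 : (0 : Rsp n) ∈ PL := zero_mem_polarSet L
  -- image of PL under Mtr
  have hMtrCont : Continuous (Mtr A B) := by
    rw [Mtr_eq]; exact (MtrL A B).continuous_of_finiteDimensional
  set IL := Mtr A B '' PL with hIL
  have hILcomp : IsCompact IL := hPLcomp.image hMtrCont
  have hILconv : Convex ℝ IL := by
    rw [hIL, Mtr_eq]; exact (convex_polarSet L).linear_image (MtrL A B)
  have hIL0 : (0 : Rsp2 n m) ∈ IL := by
    refine ⟨0, hPL0, ?_⟩
    rw [Mtr_eq]; exact map_zero _
  -- the sum S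
  set S := PC + IL with hS
  have hScomp : IsCompact S := hPCcomp.add hILcomp
  have hSconv : Convex ℝ S := (convex_polarSet C).add hILconv
  have hS0 : (0 : Rsp2 n m) ∈ S := by
    have := Set.add_mem_add hPC0 hIL0; simpa using this
  have hPCsubS : PC ⊆ S := fun p hp => by
    have := Set.add_mem_add hp hIL0; simpa using this
  have hSint : (0 : Rsp2 n m) ∈ interior S := by
    have h1 : (0 : Rsp2 n m) ∈ interior PC := by
      obtain ⟨R, hR, hCsub⟩ :=
        hCcomp.isBounded.subset_closedBall_lt 0 0
      exact zero_mem_interior_polarSet hR hCsub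
    exact interior_mono hPCsubS h1
  obtain ⟨εS, hεS, hballS⟩ := Metric.mem_nhds_iff.1 (mem_interior_iff_mem_nhds.1 hSint)
  -- Kplus is a proper C-set
  have hKcomp : IsCompact Kplus := by
    rw [hK]
    exact Metric.isCompact_of_isClosed_isBounded (isClosed_polarSet _)
      (Metric.isBounded_closedBall.subset (polarSet_subset_closedBall hεS hballS))
  have hKconv : Convex ℝ Kplus := by rw [hK]; exact convex_polarSet _
  have hK0 : (0 : Rsp2 n m) ∈ Kplus := by rw [hK]; exact zero_mem_polarSet _
  have hKint : (0 : Rsp2 n m) ∈ interior Kplus := by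
    rw [hK]
    obtain ⟨R, hR, hSsub⟩ := hScomp.isBounded.subset_closedBall_lt 0 0
    exact zero_mem_interior_polarSet hR hSsub
  have hKproper : IsProperCSet Kplus := ⟨⟨hKcomp, hKconv, hK0⟩, hKint⟩
  -- the gauge identity (b)
  have hgauge : ∀ w : Rsp2 n m,
      mgauge Kplus w = mgauge L (Mfwd A B w) + mgauge C w := by
    intro w
    have h1 : mgauge Kplus w = hsup S w := by
      rw [hK]; exact mgauge_polarSet hScomp hS0 w
    have h2 : hsup S w = hsup PC w + hsup IL w :=
      hsup_add hPCcomp ⟨0, hPC0⟩ hILcomp ⟨0, hIL0⟩ w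
    have h3 : hsup IL w = hsup PL (Mfwd A B w) :=
      hsup_image (Mtr_inner A B) PL w
    have h4 : hsup PC w = mgauge C w := by
      rw [← mgauge_polarSet hPCcomp hPC0 w, hPC, bipolar hCconv hCcomp.isClosed hC0]
    have h5 : hsup PL (Mfwd A B w) = mgauge L (Mfwd A B w) := by
      rw [← mgauge_polarSet hPLcomp hPL0, hPL, bipolar hLconv hLcomp.isClosed hL0]
    rw [h1, h2, h3, h4, h5, add_comm]
  -- Lplus is a proper C-set
  have hPxCont : Continuous (Pxproj : Rsp2 n m → Rsp n) := by
    rw [Pxproj_eq]; exact PxprojL.continuous_of_finiteDimensional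
  have hLpcomp : IsCompact Lplus := by rw [hLp]; exact hKcomp.image hPxCont
  have hLpconv : Convex ℝ Lplus := by
    rw [hLp, Pxproj_eq]; exact hKconv.linear_image _
  have hLp0 : (0 : Rsp n) ∈ Lplus := by
    rw [hLp]; exact ⟨0, hK0, rfl⟩
  have hLpint : (0 : Rsp n) ∈ interior Lplus := by
    obtain ⟨ε, hε, hball⟩ := Metric.mem_nhds_iff.1 (mem_interior_iff_mem_nhds.1 hKint)
    rw [mem_interior]
    refine ⟨Metric.ball 0 ε, ?_, Metric.isOpen_ball, by simp [hε]⟩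
    intro x hx
    set w : Rsp2 n m := (WithLp.equiv 2 (Rsp n × Rsp m)).symm (x, 0) with hw
    have hwK : w ∈ Kplus := by
      apply hball
      rw [Metric.mem_ball, dist_zero_right, norm_pair_zero w rfl]
      rw [Metric.mem_ball, dist_zero_right] at hx
      exact hx
    rw [hLp]
    exact ⟨w, hwK, rfl⟩
  have hLpproper : IsProperCSet Lplus := ⟨⟨hLpcomp, hLpconv, hLp0⟩, hLpint⟩
  refine ⟨⟨hKproper, hLpproper⟩, fun x u => hgauge _, fun x => ?_⟩
  obtain ⟨u, hu⟩ := hLyap x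
  refine ⟨u, ?_, ?_⟩
  · have := mgauge_image_le (T := (Pxproj : Rsp2 n m → Rsp n))
      (fun c w => rfl) hKint (WithLp.toLp 2 (x, u) : Rsp2 n m)
    rw [hLp]
    exact this
  · rw [hgauge]
    exact hu
end
end

section
/- Let 𝒞 ⊆ ℝ^{n+m} be a proper C-set, let A ∈ ℝ^{n×n}, B ∈ ℝ^{n×m}, and let S ⊆ ℝⁿ be a C-set. Define the sequences 𝒯₁ = (𝒞* ⊕ MᵀS)*, 𝒫₁ = P_x𝒯₁, and for k ≥ 1, 𝒯_{k+1} = (𝒞* ⊕ Mᵀ𝒫_k*)*, 𝒫_{k+1} = P_x𝒯_{k+1}. If 𝒫₁* ⊆ S, then for every k ≥ 1, 𝒫_k ⊆ 𝒫_{k+1}. -/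
open Pointwise Filter Topology Matrix

noncomputable section

variable {n m : ℕ}

lemma polarSet_anti {E : Type*} [NormedAddCommGroup E] [InnerProductSpace ℝ E]
    {X Y : Set E} (h : X ⊆ Y) : polarSet Y ⊆ polarSet X :=
  fun _ hz x hx => hz x (h hx)

/-- if 𝒫₁* ⊆ S, the iterates are monotonically nondecreasing. -/
theorem stmt_11 (n m : ℕ) (C : Set (Rsp2 n m)) (hC : IsProperCSet C)
    (A : Matrix (Fin n) (Fin n) ℝ) (B : Matrix (Fin n) (Fin m) ℝ)
    (S : Set (Rsp n)) (hS : IsCSet S)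
    (P : ℕ → Set (Rsp n))
    (hP0 : P 0 = Pxproj '' polarSet (polarSet C + Mtr A B '' S))
    (hPs : ∀ k : ℕ, P (k + 1) = Pxproj '' polarSet (polarSet C + Mtr A B '' polarSet (P k)))
    (hmono : polarSet (P 0) ⊆ S) :
    ∀ k : ℕ, P k ⊆ P (k + 1) := by
  intro k
  induction k with
  | zero =>
    rw [hPs 0]
    conv_lhs => rw [hP0]
    exact Set.image_mono (polarSet_anti
      (Set.add_subset_add subset_rfl (Set.image_mono hmono)))
  | succ k ih =>
    rw [hPs k, hPs (k + 1)]
    exact Set.image_mono (polarSet_anti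
      (Set.add_subset_add subset_rfl (Set.image_mono (polarSet_anti ih))))
end
end
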